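/- Let θ ∈ ℝ be irrational and let g = [[a,b],[c,d]] ∈ SL₂(ℤ) satisfy (aθ+b)/(cθ+d) = θ, with c > 0 and cθ+d > 0; set ε = (cθ+d)/c. Let E be the space of functions f : ℝ × ℤ/cℤ → ℂ Schwartz in the first variable, with operators (Ǔf)(x,[n]) = f(x−ε, [n−1]), (V̌f)(x,[n]) = exp(2πix)·exp(−2πi d n̄/c)·f(x,[n]), (Ûf)(x,[n]) = f(x−1/c, [n−a]), (V̂f)(x,[n]) = exp(2πix/(cε))·exp(−2πi n̄/c)·f(x,[n]), where n̄ ∈ {0,…,c−1} represents [n]. Then each of Û and V̂ commutes with each of Ǔ and V̌: Û∘Ǔ = Ǔ∘Û, Û∘V̌ = V̌∘Û, V̂∘Ǔ = Ǔ∘V̂, and V̂∘V̌ = V̌∘V̂. -/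

import Mathlib

open Complex Real

/-- `f : ℝ × ℤ/cℤ → ℂ` is Schwartz in the first variable. -/
def SchwartzInFirst {c : ℕ} (f : ℝ × ZMod c → ℂ) : Prop :=
  ∀ n : ZMod c, ∃ g : SchwartzMap ℝ ℂ, ∀ x : ℝ, f (x, n) = g x

/-- The operator `Ǔ`: `(Ǔf)(x,[n]) = f(x−ε, [n−1])`. -/
def Ucheck (ε : ℝ) {c : ℕ} (f : ℝ × ZMod c → ℂ) : ℝ × ZMod c → ℂ :=
  fun p => f (p.1 - ε, p.2 - 1)

/-- The operator `V̌`: `(V̌f)(x,[n]) = exp(2πix)·exp(−2πi d n̄/c)·f(x,[n])`. -/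
noncomputable def Vcheck (d : ℤ) {c : ℕ} (f : ℝ × ZMod c → ℂ) : ℝ × ZMod c → ℂ :=
  fun p => Complex.exp (2 * π * I * (p.1 : ℂ)) *
    Complex.exp (-2 * π * I * (d : ℂ) * ((p.2.val : ℕ) : ℂ) / (c : ℂ)) * f p

/-- The operator `Û`: `(Ûf)(x,[n]) = f(x−1/c, [n−a])`. -/
noncomputable def Uhat (a : ℤ) {c : ℕ} (f : ℝ × ZMod c → ℂ) : ℝ × ZMod c → ℂ :=
  fun p => f (p.1 - 1 / (c : ℝ), p.2 - (a : ZMod c))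

/-- The operator `V̂`: `(V̂f)(x,[n]) = exp(2πix/(cε))·exp(−2πi n̄/c)·f(x,[n])`. -/
noncomputable def Vhat (ε : ℝ) {c : ℕ} (f : ℝ × ZMod c → ℂ) : ℝ × ZMod c → ℂ :=
  fun p => Complex.exp (2 * π * I * (p.1 : ℂ) / ((c : ℂ) * (ε : ℂ))) *
    Complex.exp (-2 * π * I * ((p.2.val : ℕ) : ℂ) / (c : ℂ)) * f p

lemma exp_congr_aux (c : ℕ) (hc : 0 < c) (m m' : ℤ) (h : (m : ZMod c) = (m' : ZMod c)) :
    Complex.exp (2 * π * I * (m : ℂ) / c) = Complex.exp (2 * π * I * (m' : ℂ) / c) := by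
  obtain ⟨k, hk⟩ : (c : ℤ) ∣ (m - m') := by
    rwa [← ZMod.intCast_zmod_eq_zero_iff_dvd, Int.cast_sub, sub_eq_zero]
  have hm : (m : ℂ) = (m' : ℂ) + (c : ℂ) * (k : ℂ) := by
    have h2 : m = m' + (c : ℤ) * k := by linarith
    exact_mod_cast congrArg (Int.cast : ℤ → ℂ) h2
  have hc' : (c : ℂ) ≠ 0 := Nat.cast_ne_zero.2 hc.ne'
  rw [hm, show 2 * π * I * ((m':ℂ) + (c:ℂ)*(k:ℂ)) / c = 2 * π * I * (m':ℂ)/c + (k:ℂ)*(2*π*I) by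
    field_simp]
  rw [Complex.exp_add, Complex.exp_int_mul_two_pi_mul_I, mul_one]


/-- The left action operators `Û, V̂` commute with the right action operators
`Ǔ, V̌`, making the Heisenberg module `E_g` an `𝒜_θ`-`𝒜_θ`-bimodule. -/
theorem hat_operators_commute_with_check_operators
    (θ : ℝ) (hθ : Irrational θ)
    (a b d : ℤ) (c : ℕ) (hc : 0 < c)
    (hdet : a * d - b * (c : ℤ) = 1)
    (hpos : 0 < (c : ℝ) * θ + (d : ℝ))
    (hfix : ((a : ℝ) * θ + (b : ℝ)) / ((c : ℝ) * θ + (d : ℝ)) = θ)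
    (ε : ℝ) (hε : ε = ((c : ℝ) * θ + (d : ℝ)) / (c : ℝ))
    (f : ℝ × ZMod c → ℂ) (hf : SchwartzInFirst f) :
    (∀ p : ℝ × ZMod c, Uhat a (Ucheck ε f) p = Ucheck ε (Uhat a f) p) ∧
    (∀ p : ℝ × ZMod c, Uhat a (Vcheck d f) p = Vcheck d (Uhat a f) p) ∧
    (∀ p : ℝ × ZMod c, Vhat ε (Ucheck ε f) p = Ucheck ε (Vhat ε f) p) ∧
    (∀ p : ℝ × ZMod c, Vhat ε (Vcheck d f) p = Vcheck d (Vhat ε f) p) := by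
  haveI : NeZero c := ⟨hc.ne'⟩
  have hcR : (c : ℝ) ≠ 0 := Nat.cast_ne_zero.2 hc.ne'
  have hcC : (c : ℂ) ≠ 0 := Nat.cast_ne_zero.2 hc.ne'
  have hεpos : 0 < ε := by rw [hε]; exact div_pos hpos (Nat.cast_pos.2 hc)
  have hεC : (ε : ℂ) ≠ 0 := by exact_mod_cast hεpos.ne'
  have had : (a : ZMod c) * (d : ZMod c) = 1 := by
    have := congrArg (Int.cast : ℤ → ZMod c) hdet
    push_cast at this
    simpa [ZMod.natCast_self] using this
  refine ⟨?_, ?_, ?_, ?_⟩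
  · intro p
    simp only [Uhat, Ucheck]
    rw [show p.1 - 1/(c:ℝ) - ε = p.1 - ε - 1/(c:ℝ) by ring,
        show p.2 - (a : ZMod c) - 1 = p.2 - 1 - (a : ZMod c) by ring]
  · intro p
    simp only [Uhat, Vcheck]
    congr 1
    rw [← Complex.exp_add, ← Complex.exp_add]
    rw [show 2 * π * I * (((p.1 - 1/(c:ℝ) : ℝ)) : ℂ) +
          -2 * π * I * (d:ℂ) * (((p.2 - (a:ZMod c)).val : ℕ) : ℂ) / c
        = 2 * π * I * (p.1 : ℂ) +
          2 * π * I * (((-(1 + d * ((p.2 - (a:ZMod c)).val : ℤ)) : ℤ)) : ℂ) / c by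
      push_cast; field_simp; ring]
    rw [show 2 * π * I * (p.1 : ℂ) + -2 * π * I * (d:ℂ) * ((p.2.val : ℕ) : ℂ) / c
        = 2 * π * I * (p.1 : ℂ) + 2 * π * I * (((-(d * (p.2.val : ℤ)) : ℤ)) : ℂ) / c by
      push_cast; ring]
    rw [Complex.exp_add, Complex.exp_add]
    congr 1
    apply exp_congr_aux c hc
    push_cast [ZMod.natCast_val, ZMod.cast_id]
    linear_combination had
  · intro p
    simp only [Vhat, Ucheck]
    congr 1
    rw [← Complex.exp_add, ← Complex.exp_add]
    rw [show 2 * π * I * (p.1 : ℂ) / ((c:ℂ) * (ε:ℂ)) +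
          -2 * π * I * ((p.2.val : ℕ) : ℂ) / c
        = 2 * π * I * (p.1 : ℂ) / ((c:ℂ) * (ε:ℂ)) +
          2 * π * I * (((-(p.2.val : ℤ) : ℤ)) : ℂ) / c by push_cast; ring]
    rw [show 2 * π * I * (((p.1 - ε : ℝ)) : ℂ) / ((c:ℂ) * (ε:ℂ)) +
          -2 * π * I * (((p.2 - 1).val : ℕ) : ℂ) / c
        = 2 * π * I * (p.1 : ℂ) / ((c:ℂ) * (ε:ℂ)) +
          2 * π * I * (((-(1 + ((p.2 - 1).val : ℤ)) : ℤ)) : ℂ) / c by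
      push_cast; field_simp; ring]
    rw [Complex.exp_add, Complex.exp_add]
    congr 1
    apply exp_congr_aux c hc
    push_cast [ZMod.natCast_val, ZMod.cast_id]
    ring
  · intro p
    simp only [Vhat, Vcheck]
    ring
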